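/- Let f : R^d → R be L-smooth, x, δ ∈ R^d, and g a random vector with E[g] = ∇f(x+δ) and E[‖g − ∇f(x+δ)‖²] ≤ σ². Then for stepsize 0 < η ≤ 1/(2L) and any Δ ∈ R with ‖δ‖ ≤ Δ, E[f(x − η g)] ≤ f(x) − (η/2)‖∇f(x)‖² + L η² σ² + (η L²/2)Δ². -/

import Mathlib

open MeasureTheory
set_option maxHeartbeats 1000000

lemma line_deriv (d : ℕ) (f : EuclideanSpace ℝ (Fin d) → ℝ) (hdiff : Differentiable ℝ f)
    (x v : EuclideanSpace ℝ (Fin d)) (t : ℝ) :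
    HasDerivAt (fun t : ℝ => f (x + t • v)) (inner ℝ (gradient f (x + t • v)) v : ℝ) t := by
  have h1 : HasDerivAt (fun t : ℝ => x + t • v) v t := by
    simpa using ((hasDerivAt_id t).smul_const v).const_add x
  have h2 := ((hdiff (x + t • v)).hasGradientAt.hasFDerivAt).comp_hasDerivAt t h1
  exact h2

lemma descent (d : ℕ) (f : EuclideanSpace ℝ (Fin d) → ℝ) (L : ℝ) (hL : 0 ≤ L)
    (hdiff : Differentiable ℝ f)
    (hlip : ∀ x y, ‖gradient f x - gradient f y‖ ≤ L * ‖x - y‖)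
    (x y : EuclideanSpace ℝ (Fin d)) :
    f y ≤ f x + (inner ℝ (gradient f x) (y - x) : ℝ) + L / 2 * ‖y - x‖ ^ 2 := by
  set v := y - x with hv
  set φ : ℝ → ℝ := fun t => f (x + t • v) - t * (inner ℝ (gradient f x) v : ℝ) - L / 2 * ‖v‖ ^ 2 * t ^ 2
    with hφ
  have hderiv : ∀ t : ℝ, HasDerivAt φ
      ((inner ℝ (gradient f (x + t • v)) v : ℝ) - inner ℝ (gradient f x) v - L * ‖v‖ ^ 2 * t) t := by
    intro t
    have h1 := line_deriv d f hdiff x v t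
    have h2 : HasDerivAt (fun t : ℝ => t * (inner ℝ (gradient f x) v : ℝ))
        (inner ℝ (gradient f x) v) t := by simpa using (hasDerivAt_id t).mul_const _
    have h3 : HasDerivAt (fun t : ℝ => L / 2 * ‖v‖ ^ 2 * t ^ 2) (L / 2 * ‖v‖ ^ 2 * (2 * t)) t := by
      simpa using (hasDerivAt_pow 2 t).const_mul (L / 2 * ‖v‖ ^ 2)
    have := (h1.sub h2).sub h3
    refine this.congr_deriv ?_
    ring
  have hmono : AntitoneOn φ (Set.Icc 0 1) := by
    apply AntitoneOn.mono (s := Set.Ici (0:ℝ)) ?_ (Set.Icc_subset_Ici_self)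
    apply antitoneOn_of_deriv_nonpos (convex_Ici 0)
    · exact Continuous.continuousOn (by
        have : Continuous φ := by
          apply Continuous.sub (Continuous.sub ?_ (by continuity)) (by continuity)
          exact (hdiff.continuous).comp (by continuity)
        exact this)
    · intro t ht
      exact ((hderiv t).differentiableAt).differentiableWithinAt
    · intro t ht
      rw [interior_Ici, Set.mem_Ioi] at ht
      rw [(hderiv t).deriv]
      have hcs : (inner ℝ (gradient f (x + t • v)) v : ℝ) - inner ℝ (gradient f x) v
          ≤ ‖gradient f (x + t • v) - gradient f x‖ * ‖v‖ := by
        rw [← inner_sub_left]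
        exact real_inner_le_norm _ _
      have hl : ‖gradient f (x + t • v) - gradient f x‖ ≤ L * (t * ‖v‖) := by
        have := hlip (x + t • v) x
        simpa [norm_smul, abs_of_pos ht] using this
      nlinarith [norm_nonneg v, mul_nonneg (le_of_lt ht) (norm_nonneg v),
        mul_le_mul_of_nonneg_right hl (norm_nonneg v), ht.le]
  have h01 := hmono (Set.left_mem_Icc.2 zero_le_one) (Set.right_mem_Icc.2 zero_le_one) zero_le_one
  have hxy : x + (1:ℝ) • v = y := by simp [hv]
  have hφ0 : φ 0 = f x := by simp only [hφ]; simp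
  have hφ1 : φ 1 = f y - (inner ℝ (gradient f x) v : ℝ) - L / 2 * ‖v‖ ^ 2 := by
    simp only [hφ, one_smul, hxy, one_pow, one_mul, mul_one]
    rw [show x + v = y by rw [hv]; abel]
  rw [hφ1, hφ0] at h01
  linarith

theorem descent_lemma_delta (d : ℕ) (f : EuclideanSpace ℝ (Fin d) → ℝ) (L σ η Δ : ℝ)
    (hL : 0 < L) (hdiff : Differentiable ℝ f)
    (hlip : ∀ x y, ‖gradient f x - gradient f y‖ ≤ L * ‖x - y‖)
    {Ω : Type*} [MeasurableSpace Ω] (μ : Measure Ω) [IsProbabilityMeasure μ]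
    (g : Ω → EuclideanSpace ℝ (Fin d)) (x δ : EuclideanSpace ℝ (Fin d))
    (hg_int : Integrable g μ)
    (hg_sq_int : Integrable (fun ω => ‖g ω - gradient f (x + δ)‖ ^ 2) μ)
    (hf_int : Integrable (fun ω => f (x - η • g ω)) μ)
    (hmean : ∫ ω, g ω ∂μ = gradient f (x + δ))
    (hvar : ∫ ω, ‖g ω - gradient f (x + δ)‖ ^ 2 ∂μ ≤ σ ^ 2)
    (hη : 0 < η) (hη2 : η ≤ 1 / (2 * L)) (hΔ : ‖δ‖ ≤ Δ) :
    ∫ ω, f (x - η • g ω) ∂μ ≤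
      f x - (η / 2) * ‖gradient f x‖ ^ 2 + L * η ^ 2 * σ ^ 2
        + (η * L ^ 2 / 2) * Δ ^ 2 := by
  set G := gradient f (x + δ) with hG
  set Gx := gradient f x with hGx
  -- pointwise descent bound
  have key : ∀ ω, f (x - η • g ω) ≤
      f x - η * (inner ℝ Gx (g ω) : ℝ) + L / 2 * η ^ 2 * ‖g ω‖ ^ 2 := by
    intro ω
    have h := descent d f L hL.le hdiff hlip x (x - η • g ω)
    have h1 : (x - η • g ω) - x = -(η • g ω) := by abel
    rw [h1] at h
    have h2 : (inner ℝ Gx (-(η • g ω)) : ℝ) = -(η * inner ℝ Gx (g ω)) := by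
      rw [inner_neg_right, real_inner_smul_right]
    have h3 : ‖-(η • g ω)‖ ^ 2 = η ^ 2 * ‖g ω‖ ^ 2 := by
      rw [norm_neg, norm_smul, mul_pow, Real.norm_eq_abs, sq_abs]
    rw [h2, h3] at h
    linarith
  -- integrability
  have hgsub : Integrable (fun ω => g ω - G) μ := hg_int.sub (integrable_const G)
  have hinner1 : Integrable (fun ω => (inner ℝ Gx (g ω) : ℝ)) μ := hg_int.const_inner Gx
  have hinner2 : Integrable (fun ω => (inner ℝ (g ω - G) G : ℝ)) μ := hgsub.inner_const G
  have hnormsq : Integrable (fun ω => ‖g ω‖ ^ 2) μ := by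
    have heq : (fun ω => ‖g ω‖ ^ 2)
        = fun ω => ‖g ω - G‖ ^ 2 + 2 * (inner ℝ (g ω - G) G : ℝ) + ‖G‖ ^ 2 := by
      funext ω
      have h := norm_add_sq_real (g ω - G) G
      have h2 : g ω - G + G = g ω := by abel
      rw [h2] at h
      exact h
    rw [heq]
    exact Integrable.add (by exact hg_sq_int.add (hinner2.const_mul 2)) (integrable_const _)
  have hRHS : Integrable
      (fun ω => f x - η * (inner ℝ Gx (g ω) : ℝ) + L / 2 * η ^ 2 * ‖g ω‖ ^ 2) μ := by
    have h2 : Integrable (fun ω => (L / 2 * η ^ 2) * ‖g ω‖ ^ 2) μ := hnormsq.const_mul _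
    exact ((integrable_const (f x)).sub (hinner1.const_mul η)).add (by
      simpa [mul_assoc] using h2)
  have hmono := integral_mono hf_int hRHS key
  -- compute integral of RHS
  have hIinner : ∫ ω, (inner ℝ Gx (g ω) : ℝ) ∂μ = inner ℝ Gx G := by
    rw [← hmean]; exact (integral_inner hg_int Gx)
  have hIsub : ∫ ω, (g ω - G) ∂μ = 0 := by
    rw [integral_sub hg_int (integrable_const G), hmean, integral_const]
    simp
  have hIinner2 : ∫ ω, (inner ℝ (g ω - G) G : ℝ) ∂μ = 0 := by
    have : ∀ ω, (inner ℝ (g ω - G) G : ℝ) = inner ℝ G (g ω - G) := fun ω => real_inner_comm _ _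
    simp_rw [this]
    rw [integral_inner hgsub G, hIsub, inner_zero_right]
  have hIsq : ∫ ω, ‖g ω‖ ^ 2 ∂μ ≤ σ ^ 2 + ‖G‖ ^ 2 := by
    have heq : (fun ω => ‖g ω‖ ^ 2)
        = fun ω => ‖g ω - G‖ ^ 2 + 2 * (inner ℝ (g ω - G) G : ℝ) + ‖G‖ ^ 2 := by
      funext ω
      have h := norm_add_sq_real (g ω - G) G
      have h2 : g ω - G + G = g ω := by abel
      rw [h2] at h
      exact h
    have i1 : Integrable (fun ω => ‖g ω - G‖ ^ 2 + 2 * (inner ℝ (g ω - G) G : ℝ)) μ := by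
      exact hg_sq_int.add (hinner2.const_mul 2)
    have i2 : Integrable (fun ω => 2 * (inner ℝ (g ω - G) G : ℝ)) μ := hinner2.const_mul 2
    rw [heq, integral_add i1 (integrable_const _),
      integral_add hg_sq_int i2, integral_const_mul, hIinner2,
      integral_const]
    simp only [probReal_univ, measure_univ, ENNReal.toReal_one, one_smul, mul_zero, add_zero]
    linarith
  have hIRHS : ∫ ω, (f x - η * (inner ℝ Gx (g ω) : ℝ) + L / 2 * η ^ 2 * ‖g ω‖ ^ 2) ∂μ
      = f x - η * (inner ℝ Gx G : ℝ) + L / 2 * η ^ 2 * (∫ ω, ‖g ω‖ ^ 2 ∂μ) := by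
    have h2 : Integrable (fun ω => (L / 2 * η ^ 2) * ‖g ω‖ ^ 2) μ := hnormsq.const_mul _
    have i3 : Integrable (fun ω => f x - η * (inner ℝ Gx (g ω) : ℝ)) μ := by
      exact (integrable_const (f x)).sub (hinner1.const_mul η)
    rw [integral_add i3 (by simpa [mul_assoc] using h2),
      integral_sub (integrable_const (f x)) (hinner1.const_mul η),
      integral_const_mul, hIinner, integral_const]
    have : ∫ ω, L / 2 * η ^ 2 * ‖g ω‖ ^ 2 ∂μ = L / 2 * η ^ 2 * ∫ ω, ‖g ω‖ ^ 2 ∂μ := by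
      exact integral_const_mul (L / 2 * η ^ 2) (fun ω => ‖g ω‖ ^ 2)
    rw [this]
    simp
  rw [hIRHS] at hmono
  -- final algebra
  have hσ : (0:ℝ) ≤ σ ^ 2 := le_trans (integral_nonneg fun ω => sq_nonneg _) hvar
  have hGG : ‖Gx - G‖ ≤ L * Δ := by
    have := hlip x (x + δ)
    have h1 : x - (x + δ) = -δ := by abel
    rw [h1, norm_neg] at this
    calc ‖Gx - G‖ ≤ L * ‖δ‖ := this
    _ ≤ L * Δ := by nlinarith
  have hpol : (inner ℝ Gx G : ℝ) = (‖Gx‖ ^ 2 + ‖G‖ ^ 2 - ‖Gx - G‖ ^ 2) / 2 := by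
    have := norm_sub_sq_real Gx G
    linarith
  have hLη : L * η ≤ 1 / 2 := by
    rw [le_div_iff₀ (by positivity)] at hη2
    linarith
  have hGsq : ‖Gx - G‖ ^ 2 ≤ L ^ 2 * Δ ^ 2 := by
    have h0 : (0:ℝ) ≤ L * Δ := le_trans (norm_nonneg _) hGG
    nlinarith [norm_nonneg (Gx - G)]
  have hstep : L / 2 * η ^ 2 * (∫ ω, ‖g ω‖ ^ 2 ∂μ) ≤ L / 2 * η ^ 2 * (σ ^ 2 + ‖G‖ ^ 2) := by
    apply mul_le_mul_of_nonneg_left hIsq (by positivity)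
  rw [hpol] at hmono
  nlinarith [sq_nonneg ‖G‖, hmono, hstep, sq_nonneg (‖G‖), mul_pos hη hη,
    mul_nonneg (mul_nonneg hL.le (sq_nonneg η)) hσ, sq_nonneg η,
    mul_le_mul_of_nonneg_right hGsq (by positivity : (0:ℝ) ≤ η / 2),
    mul_le_mul_of_nonneg_right hLη (mul_nonneg (mul_nonneg hη.le hη.le) (sq_nonneg ‖G‖))]
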